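/- arXiv:1305.2551 — 4 statements merged into one kernel-verified Lean document; each statement's English description precedes it below -/
import Mathlib

section
/- Let S = K[x₁,...,xₙ] with graded maximal ideal m, and let A = S/I be an Artinian graded K-algebra with the Sperner property. If p is an integer with dim_K A_p = max_k dim_K A_k, then the ideal I + m^p has the Rees property. -/
open MvPolynomial

/-- The minimal number of generators of an ideal. -/
noncomputable def mu {R : Type*} [CommRing R] (I : Ideal R) : ℕ :=
  sInf {k | ∃ s : Finset R, s.card = k ∧ Ideal.span (s : Set R) = I}

/-- The graded maximal ideal `(x₁, …, xₙ)` of `K[x₁, …, xₙ]`. -/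
noncomputable def mm (K : Type*) [Field K] (n : ℕ) : Ideal (MvPolynomial (Fin n) K) :=
  Ideal.span (Set.range X)

/-- `I` is `m`-full: `mI : y = I` for some `y ∈ m`. -/
def IsMFull {R : Type*} [CommRing R] (m I : Ideal R) : Prop :=
  ∃ y ∈ m, (m * I).colon (Ideal.span {y}) = I

/-- A homogeneous ideal: one containing all homogeneous components of its elements. -/
def IsHomog {K : Type*} [Field K] {n : ℕ} (I : Ideal (MvPolynomial (Fin n) K)) : Prop :=
  ∀ f ∈ I, ∀ k : ℕ, homogeneousComponent k f ∈ I

/-- `dim_K (S/I)_k`, the dimension of the degree `k` part of `S/I`. -/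
noncomputable def hdim (K : Type*) [Field K] (n : ℕ)
    (I : Ideal (MvPolynomial (Fin n) K)) (k : ℕ) : ℕ :=
  Module.finrank K (Submodule.map (Ideal.Quotient.mkₐ K I).toLinearMap
    (homogeneousSubmodule (Fin n) K k))

/-- The total degree of an exponent vector. -/
def mdeg {n : ℕ} (d : Fin n →₀ ℕ) : ℕ := d.sum fun _ e => e

/-- `M_k(S/I)`: the exponent vectors of degree `k` monomials not in `I`. -/
def MSet (K : Type*) [Field K] {n : ℕ} (I : Ideal (MvPolynomial (Fin n) K)) (k : ℕ) :
    Set (Fin n →₀ ℕ) := {d | mdeg d = k ∧ (monomial d (1 : K)) ∉ I}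

/-- `I` is a monomial ideal. -/
def IsMonomialIdeal {K : Type*} [Field K] {n : ℕ} (I : Ideal (MvPolynomial (Fin n) K)) : Prop :=
  ∀ f ∈ I, ∀ d ∈ f.support, (monomial d (1 : K)) ∈ I

/-- The LYM property of the divisibility poset of monomials outside `I`,
ranked by degree.  (Divisibility of monomials is the pointwise order `≤` on
exponent vectors.) -/
def MLYM (K : Type*) [Field K] {n : ℕ} (I : Ideal (MvPolynomial (Fin n) K)) : Prop :=
  ∀ F : Finset (Fin n →₀ ℕ), (∀ d ∈ F, (monomial d (1 : K)) ∉ I) →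
    IsAntichain (· ≤ ·) (F : Set (Fin n →₀ ℕ)) →
    ∑ d ∈ F, (1 : ℚ) / (MSet K I (mdeg d)).ncard ≤ 1

/-- The Sperner property of the Artinian algebra `S/I`:
the maximal number of generators of an ideal of `S/I` equals the maximal
value of the Hilbert function of `S/I`. -/
def SpernerAlg {K : Type*} [Field K] {n : ℕ} (I : Ideal (MvPolynomial (Fin n) K)) : Prop :=
  sSup {m | ∃ J : Ideal (MvPolynomial (Fin n) K ⧸ I), mu J = m}
    = sSup (Set.range (hdim K n I))


open Submodule Module

section RP
variable {K : Type*} [Field K] {n : ℕ}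



local notation "S" => MvPolynomial (Fin n) K
local notation "hS" => homogeneousSubmodule (Fin n) K

/-- Homogeneous component of a product, as a double sum. -/
theorem hc_mul (f g : S) (k : ℕ) :
    homogeneousComponent k (f * g) =
      ∑ i ∈ Finset.range (f.totalDegree + 1), ∑ j ∈ Finset.range (g.totalDegree + 1),
        if i + j = k then homogeneousComponent i f * homogeneousComponent j g else 0 := by
  conv_lhs => rw [← sum_homogeneousComponent f, ← sum_homogeneousComponent g,
    Finset.sum_mul_sum]
  rw [map_sum]
  refine Finset.sum_congr rfl fun i _ => ?_
  rw [map_sum]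
  refine Finset.sum_congr rfl fun j _ => ?_
  have hmem : homogeneousComponent i f * homogeneousComponent j g ∈ hS (i + j) :=
    homogeneousSubmodule_mul i j
      (Submodule.mul_mem_mul (homogeneousComponent_mem i f) (homogeneousComponent_mem j g))
  rw [homogeneousComponent_of_mem hmem]
  by_cases h : i + j = k
  · rw [if_pos h, if_pos h.symm]
  · rw [if_neg h, if_neg fun hk => h hk.symm]

/-- The definitions from the problem file, needed for the lemmas. -/
theorem RP_homog_mul {P Q : Ideal S} (hP : IsHomog P) (hQ : IsHomog Q) :
    IsHomog (P * Q) := by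
  intro f hf k
  refine Submodule.mul_induction_on (C := fun f => ∀ k, homogeneousComponent k f ∈ P * Q) hf
    (fun a ha b hb k => ?_) (fun x y hx hy k => ?_) k
  · rw [hc_mul]
    refine Submodule.sum_mem _ fun i _ => Submodule.sum_mem _ fun j _ => ?_
    split
    · exact Ideal.mul_mem_mul (hP a ha i) (hQ b hb j)
    · exact zero_mem _
  · rw [map_add]; exact add_mem (hx k) (hy k)

theorem RP_constantCoeff_eq_zero {f : S} (hf : f ∈ mm K n) :
    constantCoeff f = 0 := by
  have : mm K n ≤ RingHom.ker (constantCoeff (σ := Fin n) (R := K)) := by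
    rw [mm, Ideal.span_le]
    rintro _ ⟨i, rfl⟩
    simp [RingHom.mem_ker]
  simpa [RingHom.mem_ker] using this hf

theorem RP_hc_zero_of_mem {f : S} (hf : f ∈ mm K n) :
    homogeneousComponent 0 f = 0 := by
  rw [homogeneousComponent_zero, ← constantCoeff_eq, RP_constantCoeff_eq_zero hf, map_zero]

theorem RP_hc_eq_zero_of_mem_pow : ∀ (N : ℕ) (f : S), f ∈ mm K n ^ N →
    ∀ k < N, homogeneousComponent k f = 0 := by
  intro N
  induction N with
  | zero => exact fun f _ k hk => absurd hk (Nat.not_lt_zero k)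
  | succ N ih =>
    intro f hf
    rw [pow_succ] at hf
    refine Submodule.mul_induction_on
      (C := fun f => ∀ k < N + 1, homogeneousComponent k f = 0) hf
      (fun a ha b hb => ?_) (fun x y hx hy => ?_)
    · intro k hk
      rw [hc_mul]
      refine Finset.sum_eq_zero fun i _ => Finset.sum_eq_zero fun j _ => ?_
      split
      · rename_i hij
        rcases lt_or_ge i N with hi | hi
        · rw [ih a ha i hi, zero_mul]
        · have hj : j = 0 := by omega
          rw [hj, RP_hc_zero_of_mem hb, mul_zero]
      · rfl
    · intro k hk
      rw [map_add, hx k hk, hy k hk, add_zero]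

theorem RP_degree_add (a b : Fin n →₀ ℕ) : (a + b).degree = a.degree + b.degree := by
  have h : ∀ f : Fin n →₀ ℕ, f.degree = f.sum fun _ e => e := fun f => rfl
  rw [h, h, h]
  exact Finsupp.sum_add_index' (fun _ => rfl) (fun _ _ _ => rfl)

theorem RP_monomial_mem_pow : ∀ (N : ℕ) (d : Fin n →₀ ℕ) (c : K), N ≤ d.degree →
    (monomial d c : S) ∈ mm K n ^ N := by
  intro N
  induction N with
  | zero => intro d c _; rw [pow_zero, Ideal.one_eq_top]; trivial
  | succ N ih =>
    intro d c hd
    have hdne : d ≠ 0 := by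
      intro h0
      rw [h0, map_zero] at hd; omega
    obtain ⟨i, hi⟩ := Finsupp.ne_iff.mp hdne
    have hle : Finsupp.single i 1 ≤ d := Finsupp.single_le_iff.mpr (by
      simpa [Nat.one_le_iff_ne_zero] using hi)
    set d' := d - Finsupp.single i 1 with hd'
    have hsum : Finsupp.single i 1 + d' = d := add_tsub_cancel_of_le hle
    have hdeg1 : (Finsupp.single i 1 : Fin n →₀ ℕ).degree = 1 := by
      rw [show (Finsupp.single i 1 : Fin n →₀ ℕ).degree
        = (Finsupp.single i 1 : Fin n →₀ ℕ).sum fun _ e => e from rfl]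
      rw [Finsupp.sum_single_index rfl]
    have hdeg : N ≤ d'.degree := by
      have := RP_degree_add (Finsupp.single i 1) d'
      rw [hsum, hdeg1] at this
      omega
    have hX : (X i : S) = monomial (Finsupp.single i 1) 1 := by
      rw [← X_pow_eq_monomial, pow_one]
    have : (monomial d c : S) = X i * monomial d' c := by
      rw [hX, monomial_mul, one_mul, hsum]
    rw [this, pow_succ, mul_comm ((mm K n) ^ N) (mm K n)]
    exact Ideal.mul_mem_mul (Ideal.subset_span ⟨i, rfl⟩) (ih d' c hdeg)

theorem RP_mem_pow_of_homog {f : S} {d N : ℕ} (hf : f ∈ hS d) (hN : N ≤ d) :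
    f ∈ mm K n ^ N := by
  rw [as_sum f]
  refine Submodule.sum_mem _ fun v hv => ?_
  have hvd : v.degree = d := by
    by_contra hne
    exact (mem_support_iff.mp hv) (((mem_homogeneousSubmodule _ _).mp hf).coeff_eq_zero hne)
  exact RP_monomial_mem_pow N v _ (hvd ▸ hN)

theorem RP_span_homog {s : Set S} (hs : ∀ f ∈ s, ∃ d, f ∈ hS d) :
    IsHomog (Ideal.span s) := by
  intro f hf k
  have H : ∀ k : ℕ, homogeneousComponent k f ∈ Ideal.span s := by
    induction hf using Submodule.span_induction with
    | mem x hx =>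
      intro k
      obtain ⟨d, hd⟩ := hs x hx
      rw [homogeneousComponent_of_mem hd]
      split
      · exact Ideal.subset_span hx
      · exact zero_mem _
    | zero => intro k; rw [map_zero]; exact zero_mem _
    | add x y hx hy ihx ihy => intro k; rw [map_add]; exact add_mem (ihx k) (ihy k)
    | smul a x hx ihx =>
      intro k
      rw [smul_eq_mul, hc_mul]
      refine Submodule.sum_mem _ fun i _ => Submodule.sum_mem _ fun j _ => ?_
      split
      · exact Ideal.mul_mem_left _ _ (ihx j)
      · exact zero_mem _
  exact H k

theorem RP_IsHomog_mm : IsHomog (mm K n) := by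
  apply RP_span_homog
  rintro _ ⟨i, rfl⟩
  exact ⟨1, (mem_homogeneousSubmodule _ _).mpr (isHomogeneous_X K i)⟩

theorem RP_IsHomog_top : IsHomog (⊤ : Ideal S) := fun _ _ _ => trivial

theorem RP_IsHomog_pow {P : Ideal S} (hP : IsHomog P) (N : ℕ) : IsHomog (P ^ N) := by
  induction N with
  | zero => rw [pow_zero, Ideal.one_eq_top]; exact RP_IsHomog_top
  | succ N ih => rw [pow_succ]; exact RP_homog_mul ih hP

theorem RP_IsHomog_sup {P Q : Ideal S} (hP : IsHomog P) (hQ : IsHomog Q) :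
    IsHomog (P ⊔ Q) := by
  intro f hf k
  obtain ⟨a, ha, b, hb, rfl⟩ := Submodule.mem_sup.mp hf
  rw [map_add]
  exact Submodule.add_mem _ (Submodule.mem_sup_left (hP a ha k))
    (Submodule.mem_sup_right (hQ b hb k))

/-- Graded Nakayama-type lemma. -/
theorem RP_nakayama {J C : Ideal S} (hC : IsHomog C) (h : J ≤ C ⊔ mm K n * J) :
    J ≤ C := by
  have hk : ∀ k : ℕ, J ≤ C ⊔ mm K n ^ k * J := by
    intro k
    induction k with
    | zero => rw [pow_zero, one_mul]; exact le_sup_right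
    | succ k ih =>
      refine ih.trans (sup_le le_sup_left ?_)
      have h1 : mm K n ^ k * J ≤ mm K n ^ k * (C ⊔ mm K n * J) := Ideal.mul_mono_right h
      have h2 : mm K n ^ k * (C ⊔ mm K n * J) = mm K n ^ k * C ⊔ mm K n ^ (k + 1) * J := by
        rw [Ideal.mul_sup, ← mul_assoc, ← pow_succ]
      refine h1.trans (h2 ▸ sup_le ?_ le_sup_right)
      exact le_sup_left.trans' Ideal.mul_le_right
  intro f hf
  obtain ⟨c, hc, g, hg, hfe⟩ := Submodule.mem_sup.mp (hk (f.totalDegree + 1) hf)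
  have hg' : g ∈ mm K n ^ (f.totalDegree + 1) := Ideal.mul_le_left hg
  have hsum : f = ∑ k ∈ Finset.range (f.totalDegree + 1), homogeneousComponent k f :=
    (sum_homogeneousComponent f).symm
  rw [hsum]
  refine Submodule.sum_mem _ fun k hk' => ?_
  have hk0 : homogeneousComponent k g = 0 :=
    RP_hc_eq_zero_of_mem_pow _ g hg' k (Finset.mem_range.mp hk')
  have heq : homogeneousComponent k f = homogeneousComponent k c := by
    rw [← hfe, map_add, hk0, add_zero]
  rw [heq]
  exact hC c hc k

theorem RP_mu_le {R : Type*} [CommRing R] {P : Ideal R} (s : Finset R)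
    (h : Ideal.span (s : Set R) = P) : mu P ≤ s.card :=
  Nat.sInf_le ⟨s, rfl, h⟩

theorem RP_mu_spec {R : Type*} [CommRing R] {P : Ideal R} (h : P.FG) :
    ∃ s : Finset R, s.card = mu P ∧ Ideal.span (s : Set R) = P := by
  obtain ⟨s, hs⟩ := h
  have hne : {k | ∃ s : Finset R, s.card = k ∧ Ideal.span (s : Set R) = P}.Nonempty :=
    ⟨s.card, s, rfl, hs⟩
  obtain ⟨s', hs1, hs2⟩ := Nat.sInf_mem hne
  exact ⟨s', hs1, hs2⟩

/-- Key lower-bound: the image of `P` in `R ⧸ W` is spanned by the images of any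
generating set, provided `mR * P ≤ W`. -/
theorem RP_map_le_span {R : Type*} [CommRing R] [Algebra K R] {mR P : Ideal R}
    (hdec : ∀ x : R, ∃ (c : K) (z : R), z ∈ mR ∧ x = algebraMap K R c + z)
    {W : Submodule K R} (hW : Submodule.restrictScalars K (mR * P) ≤ W)
    {s : Finset R} (hspan : Ideal.span (s : Set R) = P) :
    Submodule.map W.mkQ (Submodule.restrictScalars K P) ≤
      Submodule.span K (W.mkQ '' (s : Set R)) := by
  rintro _ ⟨x, hx, rfl⟩
  have hx' : x ∈ Ideal.span (s : Set R) := hspan ▸ hx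
  obtain ⟨a, ha⟩ := mem_span_finset.mp hx'
  rw [← ha.2, map_sum]
  refine Submodule.sum_mem _ fun i hi => ?_
  obtain ⟨c, z, hz, hazc⟩ := hdec (a i)
  have hiP : i ∈ P := hspan ▸ Ideal.subset_span hi
  have hzi : W.mkQ (z • i) = 0 := by
    rw [Submodule.mkQ_apply, Submodule.Quotient.mk_eq_zero]
    exact hW (Ideal.mul_mem_mul hz hiP)
  have : a i • i = c • i + z • i := by
    rw [hazc, add_smul, algebraMap_smul]
  rw [this, map_add, hzi, add_zero, map_smul]
  exact Submodule.smul_mem _ _ (Submodule.subset_span ⟨i, hi, rfl⟩)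

theorem RP_finiteDimensional_map {R : Type*} [CommRing R] [Algebra K R] {mR P : Ideal R}
    (hdec : ∀ x : R, ∃ (c : K) (z : R), z ∈ mR ∧ x = algebraMap K R c + z)
    (hfg : P.FG) {W : Submodule K R} (hW : Submodule.restrictScalars K (mR * P) ≤ W) :
    FiniteDimensional K (Submodule.map W.mkQ (Submodule.restrictScalars K P)) := by
  obtain ⟨s, hs⟩ := hfg
  have := RP_map_le_span hdec hW (s := s) hs
  have hfin : FiniteDimensional K (Submodule.span K (W.mkQ '' (s : Set R))) :=
    FiniteDimensional.span_of_finite K ((s.finite_toSet).image _)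
  exact Submodule.finiteDimensional_of_le this

theorem RP_finrank_le_mu {R : Type*} [CommRing R] [Algebra K R] {mR P : Ideal R}
    (hdec : ∀ x : R, ∃ (c : K) (z : R), z ∈ mR ∧ x = algebraMap K R c + z)
    (hfg : P.FG) {W : Submodule K R} (hW : Submodule.restrictScalars K (mR * P) ≤ W) :
    finrank K (Submodule.map W.mkQ (Submodule.restrictScalars K P)) ≤ mu P := by
  classical
  obtain ⟨s, hcard, hspan⟩ := RP_mu_spec hfg
  have hle := RP_map_le_span hdec hW (s := s) hspan
  have hfin : FiniteDimensional K (Submodule.span K (W.mkQ '' (s : Set R))) :=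
    FiniteDimensional.span_of_finite K ((s.finite_toSet).image _)
  calc finrank K (Submodule.map W.mkQ (Submodule.restrictScalars K P))
      ≤ finrank K (Submodule.span K (W.mkQ '' (s : Set R))) := Submodule.finrank_mono hle
    _ = finrank K (Submodule.span K ((s.image W.mkQ : Finset (R ⧸ W)) : Set (R ⧸ W))) := by
        rw [Finset.coe_image]
    _ ≤ (s.image W.mkQ).card := finrank_span_finset_le_card _
    _ ≤ s.card := Finset.card_image_le
    _ = mu P := hcard

theorem RP_mu_le_finrank {R : Type*} [CommRing R] [Algebra K R] [FiniteDimensional K R]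
    (P : Ideal R) : mu P ≤ finrank K R := by
  classical
  haveI : FiniteDimensional K (Submodule.restrictScalars K P) := inferInstance
  set b := Module.finBasis K (Submodule.restrictScalars K P) with hb
  set s : Finset R := Finset.image (fun i => ((b i : R))) Finset.univ with hs
  have hsub : (s : Set R) ⊆ (P : Set R) := by
    rintro _ hx
    simp only [hs, Finset.coe_image, Set.mem_image] at hx
    obtain ⟨i, _, rfl⟩ := hx
    exact (b i).2
  have hspan : Ideal.span (s : Set R) = P := by
    refine le_antisymm (Ideal.span_le.mpr hsub) ?_
    intro x hx
    have hx2 : (⟨x, hx⟩ : Submodule.restrictScalars K P) ∈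
        Submodule.span K (Set.range b) := by rw [b.span_eq]; trivial
    have : x ∈ Submodule.map (Submodule.restrictScalars K P).subtype
        (Submodule.span K (Set.range b)) := ⟨_, hx2, rfl⟩
    rw [Submodule.map_span] at this
    have h2 : Submodule.span K ((Submodule.restrictScalars K P).subtype '' Set.range b) ≤
        Submodule.restrictScalars K (Ideal.span (s : Set R)) := by
      refine Submodule.span_le.mpr ?_
      rintro _ ⟨_, ⟨i, rfl⟩, rfl⟩
      exact Ideal.subset_span (by
        simp only [hs, Finset.coe_image, Set.mem_image]
        exact ⟨i, Finset.mem_univ i, rfl⟩)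
    exact h2 this
  calc mu P ≤ s.card := RP_mu_le s hspan
    _ ≤ Finset.univ.card := Finset.card_image_le
    _ = finrank K (Submodule.restrictScalars K P) := by
        simp [Finset.card_univ, Fintype.card_fin]
    _ ≤ finrank K R := (Submodule.restrictScalars K P).finrank_le

theorem RP_finrank_map_mkQ {M : Type*} [AddCommGroup M] [Module K M]
    (V W : Submodule K M) [FiniteDimensional K V] :
    finrank K (Submodule.map W.mkQ V) + finrank K ↥(V ⊓ W) = finrank K V := by
  let φ := W.mkQ.comp V.subtype
  have hr : LinearMap.range φ = Submodule.map W.mkQ V := by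
    rw [LinearMap.range_comp, Submodule.range_subtype]
  have hk : LinearMap.ker φ = Submodule.comap V.subtype (V ⊓ W) := by
    rw [LinearMap.ker_comp, Submodule.ker_mkQ]
    ext x
    simp [x.2]
  have h := LinearMap.finrank_range_add_finrank_ker φ
  rw [hr, hk] at h
  rw [← h]
  congr 1
  exact ((Submodule.comapSubtypeEquivOfLe (inf_le_left : V ⊓ W ≤ V)).finrank_eq).symm

theorem RP_support_degree {f : S} {p : ℕ} (hf : f ∈ hS p) {v : Fin n →₀ ℕ}
    (hv : v ∈ f.support) : v.degree = p := by
  by_contra hne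
  exact (mem_support_iff.mp hv) (((mem_homogeneousSubmodule _ _).mp hf).coeff_eq_zero hne)

theorem RP_findim_hS (p : ℕ) : FiniteDimensional K ((hS p : Submodule K S)) := by
  classical
  have hfin : {d : Fin n →₀ ℕ | d.degree ≤ p}.Finite := Finsupp.finite_of_degree_le p
  haveI := FiniteDimensional.span_of_finite K
    (hfin.image (fun d => (monomial d 1 : S)))
  have hle : (hS p : Submodule K S) ≤ Submodule.span K
      ((fun d => (monomial d 1 : S)) '' {d | d.degree ≤ p}) := by
    intro f hf
    rw [as_sum f]
    refine Submodule.sum_mem _ fun v hv => ?_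
    have hvd : v.degree = p := RP_support_degree hf hv
    have heq : (monomial v (coeff v f) : S) = coeff v f • monomial v 1 := by
      rw [smul_monomial, smul_eq_mul, mul_one]
    rw [heq]
    exact Submodule.smul_mem _ _ (Submodule.subset_span ⟨v, by simp [hvd], rfl⟩)
  exact Submodule.finiteDimensional_of_le hle

-- Choice of a small homogeneous generating set modulo W for a homogeneous ideal.
set_option maxHeartbeats 1000000 in
theorem RP_exists_homog_finset (P : Ideal S) (hP : IsHomog P) (W : Submodule K S)
    [FiniteDimensional K (Submodule.map W.mkQ (Submodule.restrictScalars K P))] :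
    ∃ T : Finset S, (∀ f ∈ T, f ∈ P ∧ ∃ d, f ∈ hS d) ∧
      T.card ≤ finrank K (Submodule.map W.mkQ (Submodule.restrictScalars K P)) ∧
      Submodule.restrictScalars K P ≤ Submodule.span K (T : Set S) ⊔ W := by
  classical
  set M0 := Submodule.map W.mkQ (Submodule.restrictScalars K P) with hM0
  set Sig0 : Set (S ⧸ W) := W.mkQ '' {f : S | f ∈ P ∧ ∃ d, f ∈ hS d} with hSig0
  have hspan : Submodule.span K Sig0 = M0 := by
    refine le_antisymm (Submodule.span_le.mpr ?_) ?_
    · rintro _ ⟨x, ⟨hxP, _⟩, rfl⟩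
      exact ⟨x, hxP, rfl⟩
    · rintro _ ⟨x, hx, rfl⟩
      rw [show W.mkQ x = ∑ i ∈ Finset.range (x.totalDegree + 1),
        W.mkQ (homogeneousComponent i x) by rw [← map_sum, sum_homogeneousComponent]]
      refine Submodule.sum_mem _ fun i _ => ?_
      exact Submodule.subset_span ⟨homogeneousComponent i x,
        ⟨hP x hx i, ⟨i, homogeneousComponent_mem i x⟩⟩, rfl⟩
  obtain ⟨b, hbsub, hbspan, hbind⟩ := exists_linearIndependent K Sig0
  have hbM0 : b ⊆ (M0 : Set (S ⧸ W)) := fun x hx => by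
    have : x ∈ Submodule.span K b := Submodule.subset_span hx
    rw [hbspan, hspan] at this; exact this
  have hbfin : b.Finite := by
    have hind' : LinearIndependent K (fun x : b => (⟨(x : S ⧸ W), hbM0 x.2⟩ : M0)) := by
      apply hbind.of_comp M0.subtype
    have : Finite b := hind'.finite
    exact Set.toFinite b
  haveI : Fintype b := hbfin.fintype
  have hcardb : b.toFinset.card = finrank K M0 := by
    rw [← finrank_span_set_eq_card hbind, hbspan, hspan]
  -- choose homogeneous preimages
  have hchoice : ∀ y ∈ b, ∃ x : S, (x ∈ P ∧ ∃ d, x ∈ hS d) ∧ W.mkQ x = y := by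
    intro y hy
    obtain ⟨x, hx1, hx2⟩ := hbsub hy
    exact ⟨x, hx1, hx2⟩
  set c : S ⧸ W → S := fun y => if h : ∃ x : S, (x ∈ P ∧ ∃ d, x ∈ hS d) ∧ W.mkQ x = y
    then h.choose else 0 with hc
  have hcspec : ∀ y ∈ b, (c y ∈ P ∧ ∃ d, c y ∈ hS d) ∧ W.mkQ (c y) = y := by
    intro y hy
    have h := hchoice y hy
    simp only [hc, dif_pos h]
    exact h.choose_spec
  refine ⟨b.toFinset.image c, ?_, ?_, ?_⟩
  · intro f hf
    obtain ⟨y, hy, rfl⟩ := Finset.mem_image.mp hf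
    exact (hcspec y (Set.mem_toFinset.mp hy)).1
  · calc (b.toFinset.image c).card ≤ b.toFinset.card := Finset.card_image_le
      _ = finrank K M0 := hcardb
  · intro x hx
    have hx1 : W.mkQ x ∈ M0 := ⟨x, hx, rfl⟩
    have hx2 : W.mkQ x ∈ Submodule.span K (W.mkQ '' ((b.toFinset.image c : Finset S) : Set S)) := by
      have hbim : b ⊆ W.mkQ '' ((b.toFinset.image c : Finset S) : Set S) := by
        intro y hy
        exact ⟨c y, by
          simp only [Finset.coe_image, Set.mem_image]
          exact ⟨y, Set.mem_toFinset.mpr hy, rfl⟩, (hcspec y hy).2⟩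
      have : W.mkQ x ∈ Submodule.span K b := by rw [hbspan, hspan]; exact hx1
      exact Submodule.span_mono hbim this
    rw [← Submodule.map_span] at hx2
    obtain ⟨t, ht, hteq⟩ := hx2
    have hxt : x - t ∈ W := by
      rw [← Submodule.Quotient.eq W]
      exact hteq.symm
    have : x = t + (x - t) := by ring
    rw [this]
    exact Submodule.add_mem _ (Submodule.mem_sup_left ht) (Submodule.mem_sup_right hxt)

theorem RP_mem_mm_of_constantCoeff {g : S} (hg : constantCoeff g = 0) : g ∈ mm K n := by
  rw [as_sum g]
  refine Submodule.sum_mem _ fun v hv => ?_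
  have hvne : v ≠ 0 := by
    rintro rfl
    have h0 : coeff 0 g = 0 := by
      rw [← congrFun constantCoeff_eq g]; exact hg
    exact mem_support_iff.mp hv h0
  have hdeg : 1 ≤ v.degree := by
    rcases Nat.eq_zero_or_pos v.degree with h0 | h1
    · exact absurd (Finsupp.degree_eq_zero_iff v |>.mp h0) hvne
    · exact h1
  simpa [pow_one] using RP_monomial_mem_pow 1 v (coeff v g) hdeg

theorem RP_hdecS : ∀ x : S, ∃ (c : K) (z : S), z ∈ mm K n ∧ x = algebraMap K S c + z := by
  intro x
  refine ⟨constantCoeff x, x - C (constantCoeff x), ?_, by rw [algebraMap_eq]; ring⟩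
  apply RP_mem_mm_of_constantCoeff
  rw [map_sub, constantCoeff_C, sub_self]

theorem RP_hdim_eq (I : Ideal S) (p : ℕ) :
    hdim K n I p = finrank K (Submodule.map (Submodule.restrictScalars K I).mkQ
      ((hS p : Submodule K S))) := by
  rw [hdim]
  have hcomp : (Ideal.Quotient.mkₐ K I).toLinearMap =
      (Submodule.Quotient.restrictScalarsEquiv K (I : Submodule S S)).toLinearMap ∘ₗ
        (Submodule.restrictScalars K (I : Submodule S S)).mkQ := by
    ext x
    rfl
  rw [hcomp, Submodule.map_comp]
  exact LinearEquiv.finrank_map_eq _ _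

set_option maxHeartbeats 2000000 in
set_option synthInstance.maxHeartbeats 400000 in
theorem RP_sperner_bound (I : Ideal S) [FiniteDimensional K (MvPolynomial (Fin n) K ⧸ I)]
    (hSperner : SpernerAlg I) (p : ℕ)
    (hp : hdim K n I p = sSup (Set.range (hdim K n I)))
    (J : Ideal S) (hfgJ : J.FG) :
    finrank K (Submodule.map (Submodule.restrictScalars K (mm K n * J ⊔ I)).mkQ
      (Submodule.restrictScalars K J)) ≤ hdim K n I p := by
  classical
  set mk0 := Ideal.Quotient.mk I with hmk0
  set Jb : Ideal (MvPolynomial (Fin n) K ⧸ I) := Ideal.map mk0 J with hJb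
  set mb : Ideal (MvPolynomial (Fin n) K ⧸ I) := Ideal.map mk0 (mm K n) with hmb
  set WA : Submodule K (MvPolynomial (Fin n) K ⧸ I) :=
    Submodule.restrictScalars K (mb * Jb) with hWA
  set WJ : Submodule K S := Submodule.restrictScalars K (mm K n * J ⊔ I) with hWJ
  set ψ : MvPolynomial (Fin n) K →ₗ[K] (MvPolynomial (Fin n) K ⧸ I) ⧸ WA :=
    WA.mkQ.comp (Ideal.Quotient.mkₐ K I).toLinearMap with hψ
  have hcomap : Ideal.comap mk0 (mb * Jb) = mm K n * J ⊔ I := by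
    rw [hmb, hJb, ← Ideal.map_mul, Ideal.comap_map_of_surjective mk0
      Ideal.Quotient.mk_surjective]
    congr 1
    rw [← RingHom.ker_eq_comap_bot, hmk0, Ideal.mk_ker]
  have hψx : ∀ x : S, (ψ x = 0 ↔ x ∈ WJ) := by
    intro x
    rw [show ψ x = WA.mkQ ((Ideal.Quotient.mkₐ K I) x) from rfl, Submodule.mkQ_apply,
      Submodule.Quotient.mk_eq_zero]
    have h1 : ((Ideal.Quotient.mkₐ K I) x ∈ WA) ↔ mk0 x ∈ mb * Jb := Iff.rfl
    rw [h1, ← Ideal.mem_comap, hcomap]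
    exact Iff.rfl
  have hkerψ : LinearMap.ker ψ = WJ := by
    ext x
    rw [LinearMap.mem_ker]
    exact hψx x
  set φ := WJ.liftQ ψ hkerψ.symm.le with hφ
  have hinj : Function.Injective φ := by
    rw [← LinearMap.ker_eq_bot]
    exact Submodule.ker_liftQ_eq_bot _ _ _ hkerψ.le
  have hmap : Submodule.map φ (Submodule.map WJ.mkQ (Submodule.restrictScalars K J)) ≤
      Submodule.map WA.mkQ (Submodule.restrictScalars K Jb) := by
    rintro _ ⟨y, ⟨x, hx, rfl⟩, rfl⟩
    exact ⟨mk0 x, Ideal.mem_map_of_mem _ hx, rfl⟩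
  have hdecA : ∀ x : (MvPolynomial (Fin n) K ⧸ I), ∃ (c : K) (z : (MvPolynomial (Fin n) K ⧸ I)),
      z ∈ mb ∧ x = algebraMap K _ c + z := by
    intro x
    obtain ⟨f, rfl⟩ := Ideal.Quotient.mk_surjective (I := I) x
    obtain ⟨c, z, hz, hf⟩ := RP_hdecS f
    refine ⟨c, mk0 z, Ideal.mem_map_of_mem _ hz, ?_⟩
    rw [hf, map_add, ← (Ideal.Quotient.mkₐ K I).commutes c, Ideal.Quotient.mkₐ_eq_mk]
  have hfgJb : Jb.FG := hfgJ.map mk0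
  have hbdd : BddAbove {m | ∃ J' : Ideal (MvPolynomial (Fin n) K ⧸ I), mu J' = m} := by
    refine ⟨finrank K (MvPolynomial (Fin n) K ⧸ I), ?_⟩
    rintro m ⟨J', rfl⟩
    exact RP_mu_le_finrank J'
  have hSperner' : sSup {m | ∃ J' : Ideal (MvPolynomial (Fin n) K ⧸ I), mu J' = m}
      = sSup (Set.range (hdim K n I)) := hSperner
  calc finrank K (Submodule.map WJ.mkQ (Submodule.restrictScalars K J))
      = finrank K (Submodule.map φ (Submodule.map WJ.mkQ (Submodule.restrictScalars K J))) :=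
        (Submodule.equivMapOfInjective φ hinj _).finrank_eq
    _ ≤ finrank K (Submodule.map WA.mkQ (Submodule.restrictScalars K Jb)) :=
        Submodule.finrank_mono hmap
    _ ≤ mu Jb := RP_finrank_le_mu hdecA hfgJb hWA.symm.le
    _ ≤ sSup {m | ∃ J' : Ideal (MvPolynomial (Fin n) K ⧸ I), mu J' = m} :=
        le_csSup hbdd ⟨Jb, rfl⟩
    _ = sSup (Set.range (hdim K n I)) := hSperner'
    _ = hdim K n I p := hp.symm

end RP

-- If the Artinian graded algebra `A = S/I` has the Sperner property and `p`
-- is a degree where the Hilbert function of `A` attains its maximum, then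
-- `I + m^p` has the Rees property.
set_option maxHeartbeats 4000000 in
set_option synthInstance.maxHeartbeats 400000 in
/-- If the Artinian graded algebra `A = S/I` has the Sperner property and `p`
is a degree where the Hilbert function of `A` attains its maximum, then
`I + m^p` has the Rees property. -/
theorem stmt1 {K : Type*} [Field K] {n : ℕ} (I : Ideal (MvPolynomial (Fin n) K))
    (hI : IsHomog I) [FiniteDimensional K (MvPolynomial (Fin n) K ⧸ I)]
    (hSperner : SpernerAlg I)
    (p : ℕ) (hp : hdim K n I p = sSup (Set.range (hdim K n I))) :
    ∀ J : Ideal (MvPolynomial (Fin n) K), IsHomog J → I + mm K n ^ p ≤ J →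
      mu J ≤ mu (I + mm K n ^ p) := by
  intro J hJ hIJ
  classical
  set L : Ideal (MvPolynomial (Fin n) K) := I + mm K n ^ p with hLdef
  have hLsup : L = I ⊔ mm K n ^ p := by rw [hLdef, Ideal.add_eq_sup]
  have hImm : IsHomog (mm K n) := RP_IsHomog_mm
  have hLhom : IsHomog L := by rw [hLsup]; exact RP_IsHomog_sup hI (RP_IsHomog_pow hImm p)
  have hmLhom : IsHomog (mm K n * L) := RP_homog_mul hImm hLhom
  have hmIhom : IsHomog (mm K n * I) := RP_homog_mul hImm hI
  have hfgL : L.FG := IsNoetherian.noetherian L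
  have hfgI : I.FG := IsNoetherian.noetherian I
  have hfgJ : J.FG := IsNoetherian.noetherian J
  set Sp : Submodule K (MvPolynomial (Fin n) K) := homogeneousSubmodule (Fin n) K p with hSpdef
  set WL : Submodule K (MvPolynomial (Fin n) K) :=
    Submodule.restrictScalars K (mm K n * L) with hWL
  set WJ : Submodule K (MvPolynomial (Fin n) K) :=
    Submodule.restrictScalars K (mm K n * J ⊔ I) with hWJdef
  haveI hfinSp : FiniteDimensional K Sp := RP_findim_hS p
  have hIL : I ≤ L := by rw [hLsup]; exact le_sup_left
  have hIJ' : I ≤ J := le_trans hIL (hLdef ▸ hIJ)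
  have hmpL : mm K n ^ p ≤ L := by rw [hLsup]; exact le_sup_right
  have hmLmJ : mm K n * L ≤ mm K n * J := Ideal.mul_mono_right (hLdef ▸ hIJ)
  have hmILsub : mm K n * I ≤ mm K n * L := Ideal.mul_mono_right hIL
  have hmLsplit : mm K n * L = mm K n * I ⊔ mm K n ^ (p + 1) := by
    rw [hLsup, Ideal.mul_sup, ← pow_succ']
  -- degree-p elements of m*L are in I
  have hSpmL : ∀ v : MvPolynomial (Fin n) K, v ∈ Sp → v ∈ mm K n * L → v ∈ I := by
    intro v hv hvm
    rw [hmLsplit] at hvm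
    obtain ⟨g, hg, h, hh, rfl⟩ := Submodule.mem_sup.mp hvm
    have hvp : homogeneousComponent p (g + h) = g + h := by
      rw [homogeneousComponent_of_mem hv, if_pos rfl]
    have hgp : homogeneousComponent p g ∈ mm K n * I := hmIhom g hg p
    have hhp : homogeneousComponent p h = 0 :=
      RP_hc_eq_zero_of_mem_pow (p + 1) h hh p (Nat.lt_succ_self p)
    rw [← hvp, map_add, hhp, add_zero]
    exact Ideal.mul_le_right hgp
  -- degree-p elements of I + m*L are in I
  have hkey : ∀ v : MvPolynomial (Fin n) K, v ∈ Sp →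
      v ∈ Submodule.restrictScalars K I ⊔ WL → v ∈ I := by
    intro v hv hvm
    obtain ⟨a, ha, w, hw, rfl⟩ := Submodule.mem_sup.mp hvm
    have hvp : homogeneousComponent p (a + w) = a + w := by
      rw [homogeneousComponent_of_mem hv, if_pos rfl]
    have hap : homogeneousComponent p a ∈ I := hI a ha p
    have hwp : homogeneousComponent p w ∈ I :=
      hSpmL _ (homogeneousComponent_mem p w) (hmLhom w hw p)
    rw [← hvp, map_add]
    exact I.add_mem hap hwp
  have hSpL : Sp ≤ Submodule.restrictScalars K L := by
    intro v hv
    exact hmpL (RP_mem_pow_of_homog hv (le_refl p))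
  have hLdecomp : Submodule.restrictScalars K L ≤
      Submodule.restrictScalars K I ⊔ Sp ⊔ WL := by
    intro f hf
    obtain ⟨a, ha, b, hb, rfl⟩ :=
      Submodule.mem_sup.mp (show f ∈ I ⊔ mm K n ^ p from hLsup ▸ hf)
    refine Submodule.add_mem _ (Submodule.mem_sup_left (Submodule.mem_sup_left ha)) ?_
    rw [show b = ∑ k ∈ Finset.range (b.totalDegree + 1), homogeneousComponent k b from
      (sum_homogeneousComponent b).symm]
    refine Submodule.sum_mem _ fun k _ => ?_
    rcases lt_trichotomy k p with hkp | hkp | hkp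
    · rw [RP_hc_eq_zero_of_mem_pow p b hb k hkp]; exact Submodule.zero_mem _
    · subst hkp
      exact Submodule.mem_sup_left (Submodule.mem_sup_right (homogeneousComponent_mem k b))
    · refine Submodule.mem_sup_right ?_
      have h1 : homogeneousComponent k b ∈ mm K n ^ (p + 1) :=
        RP_mem_pow_of_homog (homogeneousComponent_mem k b) hkp
      have h2 : mm K n ^ (p + 1) ≤ mm K n * L := by
        rw [pow_succ']
        exact Ideal.mul_mono_right hmpL
      exact h2 h1
  -- finite dimensionality of images
  haveI hfinIb : FiniteDimensional K
      (Submodule.map WL.mkQ (Submodule.restrictScalars K I)) :=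
    RP_finiteDimensional_map RP_hdecS hfgI (fun x hx => hmILsub hx)
  haveI hfinSpb : FiniteDimensional K (Submodule.map WL.mkQ Sp) :=
    Module.Finite.map Sp WL.mkQ
  haveI hfinJb : FiniteDimensional K
      (Submodule.map WJ.mkQ (Submodule.restrictScalars K J)) :=
    RP_finiteDimensional_map RP_hdecS hfgJ (fun x hx => le_sup_left (a := mm K n * J) hx)
  set Lb := Submodule.map WL.mkQ (Submodule.restrictScalars K L) with hLbdef
  set Ib := Submodule.map WL.mkQ (Submodule.restrictScalars K I) with hIbdef
  set Spb := Submodule.map WL.mkQ Sp with hSpbdef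
  have hLbeq : Lb = Ib ⊔ Spb := by
    apply le_antisymm
    · rintro x ⟨f, hf, rfl⟩
      obtain ⟨g, hg, w, hw, rfl⟩ := Submodule.mem_sup.mp (hLdecomp hf)
      obtain ⟨g1, hg1, g2, hg2, rfl⟩ := Submodule.mem_sup.mp hg
      have hw0 : WL.mkQ w = 0 := by
        rw [Submodule.mkQ_apply, Submodule.Quotient.mk_eq_zero]; exact hw
      rw [map_add, map_add, hw0, add_zero]
      exact Submodule.add_mem _ (Submodule.mem_sup_left ⟨g1, hg1, rfl⟩)
        (Submodule.mem_sup_right ⟨g2, hg2, rfl⟩)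
    · refine sup_le (Submodule.map_mono ?_) (Submodule.map_mono hSpL)
      exact fun x hx => hIL hx
  have hinf : Ib ⊓ Spb = Submodule.map WL.mkQ (Sp ⊓ Submodule.restrictScalars K I) := by
    apply le_antisymm
    · rintro x ⟨⟨a, ha, hax⟩, s, hs, hsx⟩
      have hsa : s - a ∈ WL := by
        rw [← Submodule.Quotient.eq]
        show Submodule.Quotient.mk s = Submodule.Quotient.mk a
        rw [← Submodule.mkQ_apply, ← Submodule.mkQ_apply, hsx, hax]
      have hsI : s ∈ I := by
        refine hkey s hs ?_
        rw [show s = a + (s - a) by ring]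
        exact Submodule.add_mem _ (Submodule.mem_sup_left ha) (Submodule.mem_sup_right hsa)
      exact ⟨s, ⟨hs, hsI⟩, hsx⟩
    · rintro x ⟨s, ⟨hs1, hs2⟩, rfl⟩
      exact ⟨⟨s, hs2, rfl⟩, ⟨s, hs1, rfl⟩⟩
  haveI : FiniteDimensional K ↥(Sp ⊓ Submodule.restrictScalars K I) :=
    Submodule.finiteDimensional_of_le inf_le_left
  have eq1 : finrank K ↥Lb + finrank K ↥(Ib ⊓ Spb) = finrank K ↥Ib + finrank K ↥Spb := by
    rw [hLbeq]
    exact Submodule.finrank_sup_add_finrank_inf_eq Ib Spb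
  have eq2 : finrank K ↥Spb + finrank K ↥(Sp ⊓ WL) = finrank K ↥Sp :=
    RP_finrank_map_mkQ Sp WL
  have eq3 : finrank K ↥(Submodule.map WL.mkQ (Sp ⊓ Submodule.restrictScalars K I))
      + finrank K ↥((Sp ⊓ Submodule.restrictScalars K I) ⊓ WL)
      = finrank K ↥(Sp ⊓ Submodule.restrictScalars K I) :=
    RP_finrank_map_mkQ _ WL
  have eq4 : (Sp ⊓ Submodule.restrictScalars K I) ⊓ WL = Sp ⊓ WL := by
    apply le_antisymm
    · exact inf_le_inf_right _ inf_le_left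
    · rintro v ⟨hv1, hv2⟩
      exact ⟨⟨hv1, hSpmL v hv1 hv2⟩, hv2⟩
  have eq5 : hdim K n I p + finrank K ↥(Sp ⊓ Submodule.restrictScalars K I)
      = finrank K ↥Sp := by
    rw [RP_hdim_eq I p]
    exact RP_finrank_map_mkQ Sp (Submodule.restrictScalars K I)
  have eqinf : finrank K ↥(Ib ⊓ Spb)
      = finrank K ↥(Submodule.map WL.mkQ (Sp ⊓ Submodule.restrictScalars K I)) := by
    rw [hinf]
  have hmuL : finrank K ↥Lb ≤ mu L :=
    RP_finrank_le_mu RP_hdecS hfgL (le_of_eq rfl)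
  -- generating sets
  obtain ⟨T, hThom, hTcard, hTspan⟩ := RP_exists_homog_finset J hJ WJ
  obtain ⟨U, hUhom, hUcard, hUspan⟩ := RP_exists_homog_finset I hI WL
  have hTbound : T.card ≤ hdim K n I p :=
    hTcard.trans (RP_sperner_bound I hSperner p hp J hfgJ)
  set C : Ideal (MvPolynomial (Fin n) K) := Ideal.span ((T ∪ U : Finset _) : Set _) with hC
  have hChom : IsHomog C := by
    refine RP_span_homog ?_
    intro f hf
    rcases Finset.mem_union.mp (Finset.mem_coe.mp hf) with h | h
    · exact (hThom f h).2
    · exact (hUhom f h).2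
  have hCleJ : C ≤ J := by
    refine Ideal.span_le.mpr ?_
    intro f hf
    rcases Finset.mem_union.mp (Finset.mem_coe.mp hf) with h | h
    · exact (hThom f h).1
    · exact hIJ' (hUhom f h).1
  have hTC : Submodule.span K (T : Set (MvPolynomial (Fin n) K)) ≤
      Submodule.restrictScalars K C := by
    refine Submodule.span_le.mpr ?_
    intro x hx
    exact Ideal.subset_span (Finset.mem_coe.mpr (Finset.mem_union_left U (Finset.mem_coe.mp hx)))
  have hUC : Submodule.span K (U : Set (MvPolynomial (Fin n) K)) ≤
      Submodule.restrictScalars K C := by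
    refine Submodule.span_le.mpr ?_
    intro x hx
    exact Ideal.subset_span (Finset.mem_coe.mpr (Finset.mem_union_right T (Finset.mem_coe.mp hx)))
  have hNak : J ≤ C ⊔ mm K n * J := by
    intro f hf
    obtain ⟨t, ht, w, hw, rfl⟩ := Submodule.mem_sup.mp (hTspan hf)
    obtain ⟨wm, hwm, a, ha, rfl⟩ :=
      Submodule.mem_sup.mp (show w ∈ mm K n * J ⊔ I from hw)
    obtain ⟨u, hu, w2, hw2, rfl⟩ := Submodule.mem_sup.mp (hUspan ha)
    have hw2J : w2 ∈ mm K n * J := hmLmJ hw2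
    exact Submodule.add_mem _ (Submodule.mem_sup_left (hTC ht))
      (Submodule.add_mem _ (Submodule.mem_sup_right hwm)
        (Submodule.add_mem _ (Submodule.mem_sup_left (hUC hu))
          (Submodule.mem_sup_right hw2J)))
  have hJC : J = C := le_antisymm (RP_nakayama hChom hNak) hCleJ
  have hmuJ : mu J ≤ T.card + U.card := by
    have hspan : Ideal.span ((T ∪ U : Finset _) : Set _) = J := by rw [← hC, ← hJC]
    exact (RP_mu_le _ hspan).trans (Finset.card_union_le T U)
  have eq4' : finrank K ↥((Sp ⊓ Submodule.restrictScalars K I) ⊓ WL)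
      = finrank K ↥(Sp ⊓ WL) := by rw [eq4]
  have eqU : U.card ≤ finrank K ↥Ib := hUcard
  have hfinal : T.card + U.card ≤ finrank K ↥Lb := by omega
  exact hmuJ.trans (hfinal.trans hmuL)
end

section
/- Let S = K[x₁,...,xₙ], m = (x₁,...,xₙ), and A = S/I an Artinian graded K-algebra. Suppose p is an integer with dim_K A_p = max_k dim_K A_k, and there exists a nonnegative integer s < p such that I has no minimal generators of degree s+1 and the multiplication map ×y : A_s → A_{s+1} is not injective for every linear form y ∈ S. Then the ideal I + m^p is not m-full. -/
open MvPolynomial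

section Aux

variable {K : Type*} [Field K] {n : ℕ}

private lemma deg_add (u v : Fin n →₀ ℕ) : (u + v).degree = u.degree + v.degree := by
  rw [Finsupp.degree_eq_weight_one]
  exact map_add _ u v

private lemma homog_degree {φ : MvPolynomial (Fin n) K} {k : ℕ} (hφ : φ.IsHomogeneous k)
    {u : Fin n →₀ ℕ} (hu : coeff u φ ≠ 0) : u.degree = k := by
  rw [Finsupp.degree_eq_weight_one]
  exact hφ hu

/-- Product formula: for `φ` homogeneous of degree `k`,
the `(k+e)`-component of `φ * h` is `φ * (e-component of h)`. -/
private lemma comp_homog_mul {φ : MvPolynomial (Fin n) K} {k : ℕ} (hφ : φ.IsHomogeneous k)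
    (h : MvPolynomial (Fin n) K) (e : ℕ) :
    homogeneousComponent (k + e) (φ * h) = φ * homogeneousComponent e h := by
  ext d
  rw [coeff_homogeneousComponent, coeff_mul, coeff_mul]
  by_cases hd : d.degree = k + e
  · rw [if_pos hd]
    refine Finset.sum_congr rfl fun x hx => ?_
    rw [coeff_homogeneousComponent]
    by_cases h1 : coeff x.1 φ = 0
    · simp [h1]
    · have h3 : x.1.degree + x.2.degree = d.degree := by
        rw [← Finset.HasAntidiagonal.mem_antidiagonal.mp hx]
        exact (deg_add _ _).symm
      have h4 := homog_degree hφ h1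
      have h2 : x.2.degree = e := by omega
      rw [if_pos h2]
  · rw [if_neg hd]
    refine (Finset.sum_eq_zero fun x hx => ?_).symm
    rw [coeff_homogeneousComponent]
    by_cases h1 : coeff x.1 φ = 0
    · simp [h1]
    · by_cases h2 : x.2.degree = e
      · exfalso
        have h3 : x.1.degree + x.2.degree = d.degree := by
          rw [← Finset.HasAntidiagonal.mem_antidiagonal.mp hx]
          exact (deg_add _ _).symm
        have h4 := homog_degree hφ h1
        omega
      · rw [if_neg h2, mul_zero]

private lemma comp_homog_mul_lt {φ : MvPolynomial (Fin n) K} {k : ℕ} (hφ : φ.IsHomogeneous k)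
    (h : MvPolynomial (Fin n) K) {e : ℕ} (he : e < k) :
    homogeneousComponent e (φ * h) = 0 := by
  ext d
  rw [coeff_homogeneousComponent, coeff_zero]
  by_cases hd : d.degree = e
  · rw [if_pos hd, coeff_mul]
    refine Finset.sum_eq_zero fun x hx => ?_
    by_cases h1 : coeff x.1 φ = 0
    · rw [h1, zero_mul]
    · exfalso
      have h3 : x.1.degree + x.2.degree = d.degree := by
        rw [← Finset.HasAntidiagonal.mem_antidiagonal.mp hx]
        exact (deg_add _ _).symm
      have h4 := homog_degree hφ h1
      omega
  · rw [if_neg hd]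

private lemma X_mem_mm (i : Fin n) : (X i : MvPolynomial (Fin n) K) ∈ mm K n :=
  Ideal.subset_span ⟨i, rfl⟩

private lemma coeff_zero_of_mem_mm {f : MvPolynomial (Fin n) K} (hf : f ∈ mm K n) :
    coeff 0 f = 0 := by
  have hle : mm K n ≤ RingHom.ker (constantCoeff (σ := Fin n) (R := K)) := by
    rw [mm, Ideal.span_le]
    rintro _ ⟨i, rfl⟩
    simp [RingHom.mem_ker]
  have := hle hf
  rwa [RingHom.mem_ker, constantCoeff_eq] at this

private lemma comp_zero_of_mem_mm {f : MvPolynomial (Fin n) K} (hf : f ∈ mm K n) :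
    homogeneousComponent 0 f = 0 := by
  rw [homogeneousComponent_zero, coeff_zero_of_mem_mm hf, map_zero]

private lemma prod_X_pow_mem (u : Fin n →₀ ℕ) (t : Finset (Fin n)) :
    (∏ i ∈ t, (X i : MvPolynomial (Fin n) K) ^ u i) ∈ mm K n ^ (∑ i ∈ t, u i) := by
  classical
  induction t using Finset.induction_on with
  | empty => simp [Ideal.one_eq_top]
  | insert _ _ hnm ih =>
      rw [Finset.prod_insert hnm, Finset.sum_insert hnm, pow_add]
      exact Ideal.mul_mem_mul (Ideal.pow_mem_pow (X_mem_mm _) _) ih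

/-- A homogeneous polynomial of degree `d ≥ k` lies in `m ^ k`. -/
private lemma homog_mem_pow {φ : MvPolynomial (Fin n) K} {d k : ℕ}
    (hφ : φ.IsHomogeneous d) (hk : k ≤ d) : φ ∈ mm K n ^ k := by
  rw [as_sum φ]
  refine Ideal.sum_mem _ fun u hu => ?_
  have hud : u.degree = d := homog_degree hφ (mem_support_iff.mp hu)
  rw [monomial_eq]
  apply Ideal.mul_mem_left
  have h1 : (u.prod fun i e => (X i : MvPolynomial (Fin n) K) ^ e) ∈ mm K n ^ u.degree := by
    rw [Finsupp.prod]
    exact prod_X_pow_mem u u.support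
  exact Ideal.pow_le_pow_right (hud ▸ hk) h1

private lemma homog_mem_mm {φ : MvPolynomial (Fin n) K} {k : ℕ}
    (hφ : φ.IsHomogeneous k) (hk : 1 ≤ k) : φ ∈ mm K n := by
  have := homog_mem_pow hφ hk
  rwa [pow_one] at this

/-- "Component-closed" ideals. -/
private def HC (Q : Ideal (MvPolynomial (Fin n) K)) : Prop :=
  ∀ x ∈ Q, ∀ e : ℕ, homogeneousComponent e x ∈ Q

private lemma HC_mul_m {Q : Ideal (MvPolynomial (Fin n) K)} (hQ : HC Q) : HC (mm K n * Q) := by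
  intro x hx
  refine Submodule.mul_induction_on hx ?_ ?_
  · intro a ha b hb e
    have key : a * b = ∑ j ∈ Finset.range (a.totalDegree + 1), homogeneousComponent j a * b := by
      rw [← Finset.sum_mul, sum_homogeneousComponent]
    rw [key, map_sum]
    refine Ideal.sum_mem _ fun j _ => ?_
    by_cases hj0 : j = 0
    · subst hj0
      rw [comp_zero_of_mem_mm ha, zero_mul, map_zero]
      exact zero_mem _
    · by_cases hje : e < j
      · rw [comp_homog_mul_lt (homogeneousComponent_isHomogeneous j a) b hje]
        exact zero_mem _
      · have hje' : j + (e - j) = e := by omega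
        rw [← hje', comp_homog_mul (homogeneousComponent_isHomogeneous j a) b (e - j)]
        exact Ideal.mul_mem_mul
          (homog_mem_mm (homogeneousComponent_isHomogeneous j a) (by omega)) (hQ b hb _)
  · intro x₁ x₂ h₁ h₂ e
    rw [map_add]
    exact add_mem (h₁ e) (h₂ e)

private lemma HC_pow_m (k : ℕ) : HC ((mm K n : Ideal (MvPolynomial (Fin n) K)) ^ k) := by
  induction k with
  | zero => intro x _ e; rw [pow_zero, Ideal.one_eq_top]; trivial
  | succ k ih =>
      have h : mm K n ^ (k + 1) = mm K n * mm K n ^ k := by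
        rw [pow_succ, mul_comm]
      rw [h]
      exact HC_mul_m ih

private lemma HC_sup {P Q : Ideal (MvPolynomial (Fin n) K)} (hP : HC P) (hQ : HC Q) :
    HC (P ⊔ Q) := by
  intro x hx e
  rcases Submodule.mem_sup.mp hx with ⟨a, ha, b, hb, rfl⟩
  rw [map_add]
  exact Submodule.add_mem_sup (hP a ha e) (hQ b hb e)

/-- Components of elements of `m ^ k` vanish below degree `k`. -/
private lemma van_pow (k : ℕ) :
    ∀ x ∈ (mm K n : Ideal (MvPolynomial (Fin n) K)) ^ k, ∀ e < k, homogeneousComponent e x = 0 := by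
  induction k with
  | zero => intro x _ e he; omega
  | succ k ih =>
      intro x hx
      rw [pow_succ] at hx
      refine Submodule.mul_induction_on hx ?_ ?_
      · intro a ha b hb e he
        have key : a * b
            = ∑ j ∈ Finset.range (a.totalDegree + 1), homogeneousComponent j a * b := by
          rw [← Finset.sum_mul, sum_homogeneousComponent]
        rw [key, map_sum]
        refine Finset.sum_eq_zero fun j _ => ?_
        by_cases hjk : j < k
        · rw [ih a ha j hjk, zero_mul, map_zero]
        · rcases lt_or_eq_of_le (show e ≤ j by omega) with hlt | heq
          · exact comp_homog_mul_lt (homogeneousComponent_isHomogeneous j a) b hlt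
          · subst heq
            have h0 := comp_homog_mul (homogeneousComponent_isHomogeneous e a) b 0
            rw [Nat.add_zero] at h0
            rw [h0, comp_zero_of_mem_mm hb, mul_zero]
      · intro x₁ x₂ h₁ h₂ e he
        rw [map_add, h₁ e he, h₂ e he, add_zero]

end Aux

/-- If `dim_K A_p` is the maximal value of the Hilbert function of `A = S/I`,
`s < p`, `I` has no minimal generators in degree `s+1` (i.e. `I_{s+1} = (mI)_{s+1}`),
and multiplication `A_s → A_{s+1}` by any linear form is non-injective,
then `I + m^p` is not `m`-full. -/
theorem stmt2 {K : Type*} [Field K] {n : ℕ} (I : Ideal (MvPolynomial (Fin n) K))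
    (hI : IsHomog I) [FiniteDimensional K (MvPolynomial (Fin n) K ⧸ I)]
    (p : ℕ) (hp : hdim K n I p = sSup (Set.range (hdim K n I)))
    (s : ℕ) (hsp : s < p)
    (hnogen : ∀ f ∈ I, f.IsHomogeneous (s + 1) → f ∈ mm K n * I)
    (hnoninj : ∀ y : MvPolynomial (Fin n) K, y.IsHomogeneous 1 →
      ∃ f : MvPolynomial (Fin n) K, f.IsHomogeneous s ∧ f ∉ I ∧ y * f ∈ I) :
    ¬ IsMFull (mm K n) (I + mm K n ^ p) := by
  rintro ⟨y, hym, hcolon⟩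
  rw [Submodule.add_eq_sup] at hcolon
  set J : Ideal (MvPolynomial (Fin n) K) := I ⊔ mm K n ^ p with hJdef
  -- the linear part of y
  set ℓ : MvPolynomial (Fin n) K := homogeneousComponent 1 y with hldef
  have hℓ : ℓ.IsHomogeneous 1 := homogeneousComponent_isHomogeneous 1 y
  obtain ⟨f, hfs, hfI, hlfI⟩ := hnoninj ℓ hℓ
  -- component-closedness
  have hHCI : HC I := fun x hx e => hI x hx e
  have hmJ : mm K n * J = (mm K n * I) ⊔ (mm K n ^ (p + 1)) := by
    rw [hJdef, Ideal.mul_sup, pow_succ, mul_comm (mm K n ^ p) (mm K n)]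
  have hHCmJ : HC (mm K n * J) := by
    rw [hmJ]
    exact HC_sup (HC_mul_m hHCI) (HC_pow_m _)
  -- f is not in J
  have hfJ : f ∉ J := by
    intro hfJ'
    rcases Submodule.mem_sup.mp hfJ' with ⟨a, haI, b, hb, hab⟩
    have h1 : homogeneousComponent s f = f := by
      rw [homogeneousComponent_of_mem ((mem_homogeneousSubmodule _ _).mpr hfs), if_pos rfl]
    have h2 : homogeneousComponent s b = 0 := van_pow p b hb s hsp
    have h3 : f = homogeneousComponent s a := by
      conv_lhs => rw [← h1, ← hab]
      rw [map_add, h2, add_zero]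
    exact hfI (h3 ▸ hI a haI s)
  -- ℓ * f lies in m * J
  have hlfmJ : ℓ * f ∈ mm K n * J := by
    have h1 : (ℓ * f).IsHomogeneous (s + 1) := by
      have := hℓ.mul hfs
      rwa [add_comm] at this
    have h2 := hnogen (ℓ * f) hlfI h1
    exact Ideal.mul_mono_right le_sup_left h2
  -- the set of "bad" degrees
  set B : Set ℕ := {d | ∃ g : MvPolynomial (Fin n) K,
    g.IsHomogeneous d ∧ g ∉ J ∧ ℓ * g ∈ mm K n * J} with hB
  have hBs : s ∈ B := ⟨f, hfs, hfJ, hlfmJ⟩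
  have hBlt : ∀ d ∈ B, d < p := by
    rintro d ⟨g, hg, hgJ, -⟩
    by_contra hdp
    push_neg at hdp
    exact hgJ (Submodule.mem_sup_right (homog_mem_pow hg hdp))
  have hBbdd : BddAbove B := ⟨p, fun d hd => (hBlt d hd).le⟩
  obtain ⟨g, hgh, hgJ, hgl⟩ : ∃ g : MvPolynomial (Fin n) K,
      g.IsHomogeneous (sSup B) ∧ g ∉ J ∧ ℓ * g ∈ mm K n * J :=
    Nat.sSup_mem ⟨s, hBs⟩ hBbdd
  set d : ℕ := sSup B with hd
  have hmax : ∀ e : ℕ, d < e → ∀ h : MvPolynomial (Fin n) K,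
      h.IsHomogeneous e → ℓ * h ∈ mm K n * J → h ∈ J := by
    intro e he h hh hlh
    by_contra hhJ
    exact absurd (le_csSup hBbdd ⟨h, hh, hhJ, hlh⟩) (not_le.mpr he)
  -- the higher-order part of y
  set q : MvPolynomial (Fin n) K := y - ℓ with hq
  have hq0 : homogeneousComponent 0 q = 0 := by
    rw [hq, map_sub, comp_zero_of_mem_mm hym,
      homogeneousComponent_of_mem ((mem_homogeneousSubmodule _ _).mpr hℓ)]
    simp
  have hq1 : homogeneousComponent 1 q = 0 := by
    rw [hq, map_sub,
      homogeneousComponent_of_mem ((mem_homogeneousSubmodule _ _).mpr hℓ), if_pos rfl]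
    rw [← hldef, sub_self]
  -- Step 1: g * q ∈ J, by maximality of d
  have hqgJ : g * q ∈ J := by
    rw [← sum_homogeneousComponent (g * q)]
    refine Ideal.sum_mem _ fun e _ => ?_
    rcases lt_or_ge e d with hlt | hge
    · rw [comp_homog_mul_lt hgh q hlt]
      exact zero_mem _
    · obtain ⟨j, rfl⟩ : ∃ j : ℕ, e = d + j := ⟨e - d, by omega⟩
      rw [comp_homog_mul hgh q j]
      match j with
      | 0 => rw [hq0, mul_zero]; exact zero_mem _
      | 1 => rw [hq1, mul_zero]; exact zero_mem _
      | (j + 2) =>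
          have hh : (g * homogeneousComponent (j + 2) q).IsHomogeneous (d + (j + 2)) :=
            hgh.mul (homogeneousComponent_isHomogeneous _ q)
          refine hmax (d + (j + 2)) (by omega) _ hh ?_
          have hrep : g * homogeneousComponent (j + 2) q
              = homogeneousComponent (d + (j + 2)) (g * q) :=
            (comp_homog_mul hgh q (j + 2)).symm
          have hrep2 : ℓ * (g * homogeneousComponent (j + 2) q)
              = homogeneousComponent (1 + (d + (j + 2))) (ℓ * (g * q)) := by
            rw [hrep, comp_homog_mul hℓ (g * q) (d + (j + 2))]
          rw [hrep2]
          apply hHCmJ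
          have : ℓ * (g * q) = (ℓ * g) * q := by ring
          rw [this]
          exact Ideal.mul_mem_right q _ hgl
  -- Step 2: g * y ∈ J, hence g * z ∈ J for all z ∈ m
  have hyyg : (g * y) * y ∈ mm K n * J := by
    have hid : (g * y) * y = (ℓ * g) * y + y * (g * q) := by
      rw [hq]; ring
    rw [hid]
    exact add_mem (Ideal.mul_mem_right y _ hgl) (Ideal.mul_mem_mul hym hqgJ)
  have hgyJ : g * y ∈ J := by
    rw [← hcolon]
    exact Ideal.mem_colon_span_singleton.mpr hyyg
  have hgm : ∀ z ∈ mm K n, g * z ∈ J := by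
    intro z hz
    rw [← hcolon]
    apply Ideal.mem_colon_span_singleton.mpr
    have hid : (g * z) * y = z * (g * y) := by ring
    rw [hid]
    exact Ideal.mul_mem_mul hz hgyJ
  -- Step 3: q ∈ m², hence g * q ∈ m * J
  have hq2 : q ∈ mm K n * mm K n := by
    have h2 : q ∈ mm K n ^ 2 := by
      rw [← sum_homogeneousComponent q]
      refine Ideal.sum_mem _ fun e _ => ?_
      match e with
      | 0 => rw [hq0]; exact zero_mem _
      | 1 => rw [hq1]; exact zero_mem _
      | (e + 2) =>
          exact homog_mem_pow (homogeneousComponent_isHomogeneous _ q) (by omega)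
    rwa [pow_two] at h2
  have hgqmJ : g * q ∈ mm K n * J := by
    have h2 : q * g ∈ mm K n * J := by
      refine Submodule.mul_induction_on hq2 ?_ ?_
      · intro a ha b hb
        have hid : (a * b) * g = a * (g * b) := by ring
        rw [hid]
        exact Ideal.mul_mem_mul ha (hgm b hb)
      · intro x₁ x₂ h₁ h₂
        rw [add_mul]
        exact add_mem h₁ h₂
    rwa [mul_comm g q]
  -- Conclusion: g ∈ J, contradiction
  have hfin : g * y ∈ mm K n * J := by
    have hid : g * y = ℓ * g + g * q := by rw [hq]; ring
    rw [hid]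
    exact add_mem hgl hgqmJ
  exact hgJ (by rw [← hcolon]; exact Ideal.mem_colon_span_singleton.mpr hfin)
end

section
/- If a finite ranked poset P has the LYM property, then P has the Sperner property: the maximum size of an antichain of P equals the maximum of #P_k over all k. -/
open scoped Classical

/-- If a finite ranked poset has the LYM property, then it has the Sperner
property: the maximal size of an antichain equals the maximal size of a rank
level. -/
theorem stmt7 {P : Type*} [Fintype P] [PartialOrder P]
    (rank : P → ℕ) (hrank : ∀ a b : P, a ⋖ b → rank b = rank a + 1)
    (lvl : ℕ → Finset P) (hlvl : ∀ k, lvl k = Finset.univ.filter (fun a => rank a = k))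
    (hLYM : ∀ A : Finset P, IsAntichain (· ≤ ·) (A : Set P) →
      ∑ a ∈ A, (1 : ℚ) / (lvl (rank a)).card ≤ 1) :
    sSup {m | ∃ A : Finset P, IsAntichain (· ≤ ·) (A : Set P) ∧ A.card = m}
      = sSup (Set.range fun k => (lvl k).card) := by
  -- rank is strictly monotone on <
  have hmono : ∀ b a : P, a < b → rank a < rank b := by
    intro b
    induction b using WellFoundedLT.induction with
    | ind b IH =>
      intro a hab
      obtain ⟨x, hax, hxb⟩ := exists_le_covBy_of_lt hab
      have hxb' := hrank _ _ hxb
      rcases eq_or_lt_of_le hax with rfl | hax'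
      · omega
      · have := IH x hxb.lt a hax'
        omega
  -- each element lies in its level
  have hmem : ∀ a : P, a ∈ lvl (rank a) := by
    intro a; rw [hlvl]; simp
  -- the set of level sizes is nonempty and bounded
  have hbdd : BddAbove (Set.range fun k => (lvl k).card) := by
    refine ⟨Fintype.card P, ?_⟩
    rintro m ⟨k, rfl⟩
    exact Finset.card_le_univ _
  set M := sSup (Set.range fun k => (lvl k).card) with hM
  obtain ⟨k0, hk0⟩ := Nat.sSup_mem (Set.range_nonempty _) hbdd
  have hle : ∀ k, (lvl k).card ≤ M := fun k => le_csSup hbdd ⟨k, rfl⟩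
  -- lvl k0 is an antichain
  have hanti : IsAntichain (· ≤ ·) ((lvl k0 : Finset P) : Set P) := by
    intro a ha b hb hne hab
    simp only [hlvl, Finset.coe_filter, Set.mem_setOf_eq] at ha hb
    exact absurd (hmono b a (lt_of_le_of_ne hab hne)) (by omega)
  apply le_antisymm
  · -- every antichain has size ≤ M
    have hne : (0:ℕ) ∈ {m | ∃ A : Finset P, IsAntichain (· ≤ ·) (A : Set P) ∧ A.card = m} :=
      ⟨∅, by simp [IsAntichain], by simp⟩
    apply csSup_le ⟨0, hne⟩
    rintro m ⟨A, hA, rfl⟩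
    rcases A.eq_empty_or_nonempty with rfl | ⟨a0, ha0⟩
    · simp
    have hM1 : 1 ≤ M := le_trans (Finset.card_pos.2 ⟨a0, hmem a0⟩) (hle (rank a0))
    have key := hLYM A hA
    have hterm : ∀ a ∈ A, (1 : ℚ) / M ≤ 1 / (lvl (rank a)).card := by
      intro a _
      apply one_div_le_one_div_of_le
      · exact_mod_cast Finset.card_pos.2 ⟨a, hmem a⟩
      · exact_mod_cast hle (rank a)
    have := Finset.sum_le_sum hterm
    rw [Finset.sum_const, nsmul_eq_mul] at this
    have hMpos : (0 : ℚ) < M := by exact_mod_cast hM1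
    have : (A.card : ℚ) * (1 / M) ≤ 1 := le_trans this key
    rw [mul_one_div, div_le_one hMpos] at this
    exact_mod_cast this
  · -- lvl k0 is an antichain of size M
    exact le_csSup ⟨Fintype.card P, by rintro m ⟨A, _, rfl⟩; exact Finset.card_le_univ _⟩
      ⟨lvl k0, hanti, hk0⟩
end

section
/- Let A = S/I be a monomial Artinian K-algebra and k a positive integer. If there exists a linear form y ∈ S such that the multiplication map ×y : A_{k−1} → A_k is injective or surjective, then A has a full matching at degree k. -/
open MvPolynomial

/-- `S/I` has a full matching at degree `k`: a matching in the bipartite graph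
on `M_{k-1}(A) × M_k(A)` given by divisibility, of the maximal possible size
`min(#M_{k-1}(A), #M_k(A))`. -/
def HasFullMatching (K : Type*) [Field K] {n : ℕ}
    (I : Ideal (MvPolynomial (Fin n) K)) (k : ℕ) : Prop :=
  ∃ M : Finset ((Fin n →₀ ℕ) × (Fin n →₀ ℕ)),
    (∀ q ∈ M, q.1 ∈ MSet K I (k - 1) ∧ q.2 ∈ MSet K I k ∧ q.1 ≤ q.2) ∧
    (∀ q ∈ M, ∀ q' ∈ M, q ≠ q' → q.1 ≠ q'.1 ∧ q.2 ≠ q'.2) ∧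
    M.card = min (MSet K I (k - 1)).ncard (MSet K I k).ncard

section Stmt9Aux

variable {K : Type*} [Field K] {n : ℕ}

lemma weight_one_eq_mdeg (d : Fin n →₀ ℕ) : (Finsupp.weight 1) d = mdeg d := by
  rw [show (Finsupp.weight 1 : (Fin n →₀ ℕ) →+ ℕ) = Finsupp.weight (fun _ => 1) from rfl,
    ← Finsupp.degree_eq_weight_one]
  simp [mdeg, Finsupp.degree, Finsupp.sum]
  rfl

lemma degree_eq_mdeg (d : Fin n →₀ ℕ) : d.degree = mdeg d := by
  simp [mdeg, Finsupp.degree, Finsupp.sum]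
  rfl

lemma mem_of_support_subset (I : Ideal (MvPolynomial (Fin n) K)) {f : MvPolynomial (Fin n) K}
    (h : ∀ d ∈ f.support, (monomial d (1 : K)) ∈ I) : f ∈ I := by
  classical
  rw [f.as_sum]
  refine Ideal.sum_mem _ fun d hd => ?_
  have h2 := I.mul_mem_left (C (MvPolynomial.coeff d f)) (h d hd)
  rwa [C_mul_monomial, mul_one] at h2

lemma finite_mdeg_level (k : ℕ) : {d : Fin n →₀ ℕ | mdeg d = k}.Finite := by
  classical
  have h1 : {d : Fin n →₀ ℕ | mdeg d = k} ⊆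
      (⇑Finsupp.equivFunOnFinite) ⁻¹' (Set.pi Set.univ fun _ : Fin n => Set.Iic k) := by
    intro d hd i _
    simp only [Set.mem_Iic]
    by_cases hi : i ∈ d.support
    · calc (d i : ℕ) ≤ ∑ j ∈ d.support, d j :=
            Finset.single_le_sum (fun j _ => Nat.zero_le _) hi
        _ = k := by rw [← hd]; simp [mdeg, Finsupp.sum]
    · simp [Finsupp.notMem_support_iff.mp hi]
  exact (((Set.Finite.pi fun _ => Set.finite_Iic k)).preimage
    (Finsupp.equivFunOnFinite.injective.injOn)).subset h1

lemma finite_MSet (I : Ideal (MvPolynomial (Fin n) K)) (k : ℕ) : (MSet K I k).Finite :=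
  (finite_mdeg_level k).subset fun _ hd => hd.1

lemma matching_left (I : Ideal (MvPolynomial (Fin n) K)) (k : ℕ)
    (f : (Fin n →₀ ℕ) → (Fin n →₀ ℕ))
    (hinj : Set.InjOn f (MSet K I (k - 1)))
    (hmem : ∀ a ∈ MSet K I (k - 1), f a ∈ MSet K I k)
    (hle : ∀ a ∈ MSet K I (k - 1), a ≤ f a) :
    HasFullMatching K I k := by
  classical
  have hA := finite_MSet I (k - 1)
  have hB := finite_MSet I k
  refine ⟨hA.toFinset.image (fun a => (a, f a)), ?_, ?_, ?_⟩
  · intro q hq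
    simp only [Finset.mem_image, Set.Finite.mem_toFinset] at hq
    obtain ⟨a, ha, rfl⟩ := hq
    exact ⟨ha, hmem a ha, hle a ha⟩
  · intro q hq q' hq' hne
    simp only [Finset.mem_image, Set.Finite.mem_toFinset] at hq hq'
    obtain ⟨a, ha, rfl⟩ := hq
    obtain ⟨a', ha', rfl⟩ := hq'
    have hne' : a ≠ a' := fun h => hne (by rw [h])
    exact ⟨hne', fun h => hne' (hinj ha ha' h)⟩
  · rw [Finset.card_image_of_injective _ (fun a b h => congrArg Prod.fst h),
      min_eq_left (Set.ncard_le_ncard_of_injOn f hmem hinj hB),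
      Set.ncard_eq_toFinset_card _ hA]

lemma matching_right (I : Ideal (MvPolynomial (Fin n) K)) (k : ℕ)
    (g : (Fin n →₀ ℕ) → (Fin n →₀ ℕ))
    (hinj : Set.InjOn g (MSet K I k))
    (hmem : ∀ b ∈ MSet K I k, g b ∈ MSet K I (k - 1))
    (hle : ∀ b ∈ MSet K I k, g b ≤ b) :
    HasFullMatching K I k := by
  classical
  have hA := finite_MSet I (k - 1)
  have hB := finite_MSet I k
  refine ⟨hB.toFinset.image (fun b => (g b, b)), ?_, ?_, ?_⟩
  · intro q hq
    simp only [Finset.mem_image, Set.Finite.mem_toFinset] at hq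
    obtain ⟨b, hb, rfl⟩ := hq
    exact ⟨hmem b hb, hb, hle b hb⟩
  · intro q hq q' hq' hne
    simp only [Finset.mem_image, Set.Finite.mem_toFinset] at hq hq'
    obtain ⟨b, hb, rfl⟩ := hq
    obtain ⟨b', hb', rfl⟩ := hq'
    have hne' : b ≠ b' := fun h => hne (by rw [h])
    exact ⟨fun h => hne' (hinj hb hb' h), hne'⟩
  · rw [Finset.card_image_of_injective _ (fun a b h => congrArg Prod.snd h),
      min_eq_right (Set.ncard_le_ncard_of_injOn g hmem hinj hA),
      Set.ncard_eq_toFinset_card _ hB]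

end Stmt9Aux


/-- If for a monomial Artinian algebra `A = S/I` there is a linear form `y` such
that multiplication `×y : A_{k-1} → A_k` is injective or surjective, then `A`
has a full matching at degree `k`. -/
theorem stmt9 {K : Type*} [Field K] {n : ℕ} (I : Ideal (MvPolynomial (Fin n) K))
    (hmon : IsMonomialIdeal I) [FiniteDimensional K (MvPolynomial (Fin n) K ⧸ I)]
    (k : ℕ) (hk : 0 < k)
    (hy : ∃ y : MvPolynomial (Fin n) K, y.IsHomogeneous 1 ∧
      ((∀ f : MvPolynomial (Fin n) K, f.IsHomogeneous (k - 1) → y * f ∈ I → f ∈ I) ∨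
       (∀ g : MvPolynomial (Fin n) K, g.IsHomogeneous k →
         ∃ f : MvPolynomial (Fin n) K, f.IsHomogeneous (k - 1) ∧ g - y * f ∈ I))) :
    HasFullMatching K I k := by
  classical
  obtain ⟨y, hy1, hcase⟩ := hy
  set T : (Fin n →₀ ℕ) → (Fin n →₀ ℕ) → K := fun b a => coeff b (y * monomial a 1) with hT
  have hTle : ∀ b a, T b a ≠ 0 → a ≤ b := by
    intro b a h
    by_contra hab
    apply h
    simp only [hT, coeff_mul_monomial', if_neg hab]
  have hAfin := finite_MSet I (k - 1)
  have hBfin := finite_MSet I k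
  have hTI : ∀ b ∈ MSet K I k, ∀ a : Fin n →₀ ℕ, (monomial a (1 : K)) ∈ I → T b a = 0 := by
    intro b hb a haI
    by_contra h
    exact hb.2 (hmon _ (I.mul_mem_left y haI) b (mem_support_iff.mpr h))
  rcases hcase with hinj | hsurj
  · -- injective case
    have hall : ∀ s : Finset {x // x ∈ hAfin.toFinset},
        s.card ≤ (s.biUnion (fun a => hBfin.toFinset.filter
          (fun b => T b (↑a : Fin n →₀ ℕ) ≠ 0))).card := by
      intro s
      set N := s.biUnion (fun a => hBfin.toFinset.filter
        (fun b => T b (↑a : Fin n →₀ ℕ) ≠ 0)) with hN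
      have hvind : LinearIndependent K
          (fun (a : {x // x ∈ s}) => (fun b : {x // x ∈ N} => T ↑b ((↑a : _) : Fin n →₀ ℕ))) := by
        rw [Fintype.linearIndependent_iff]
        intro g hg a₀
        set F : MvPolynomial (Fin n) K :=
          ∑ a : {x // x ∈ s}, monomial (((a : _) : _) : Fin n →₀ ℕ) (g a) with hF
        have hcoe : Function.Injective
            (fun a : {x // x ∈ s} => (((a : _) : _) : Fin n →₀ ℕ)) := by
          intro a b h
          exact Subtype.ext (Subtype.ext h)
        have hcoeffF : ∀ a : {x // x ∈ s}, coeff (((a : _) : _) : Fin n →₀ ℕ) F = g a := by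
          intro a1
          rw [hF, coeff_sum]
          rw [Finset.sum_eq_single a1]
          · simp [coeff_monomial]
          · intro b _ hb
            rw [coeff_monomial, if_neg (fun h => hb (hcoe h))]
          · intro h
            exact absurd (Finset.mem_univ a1) h
        have hsuppF : ∀ d, coeff d F ≠ 0 →
            ∃ a : {x // x ∈ s}, d = (((a : _) : _) : Fin n →₀ ℕ) := by
          intro d hd
          by_contra hcon
          push_neg at hcon
          apply hd
          rw [hF, coeff_sum]
          exact Finset.sum_eq_zero fun a _ => by
            rw [coeff_monomial, if_neg (fun he => hcon a he.symm)]
        have hFhom : F.IsHomogeneous (k - 1) := by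
          intro d hd
          obtain ⟨a, rfl⟩ := hsuppF d hd
          rw [weight_one_eq_mdeg]
          exact (hAfin.mem_toFinset.mp ((a : _) : {x // x ∈ hAfin.toFinset}).2).1
        have hcoeffmul : ∀ d, coeff d (y * F)
            = ∑ a : {x // x ∈ s}, g a * T d (((a : _) : _) : Fin n →₀ ℕ) := by
          intro d
          rw [hF, Finset.mul_sum, coeff_sum]
          refine Finset.sum_congr rfl fun a _ => ?_
          have hmono : monomial ((((a : _) : _)) : Fin n →₀ ℕ) (g a)
              = g a • monomial ((((a : _) : _)) : Fin n →₀ ℕ) (1 : K) := by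
            rw [smul_monomial, smul_eq_mul, mul_one]
          rw [hmono, mul_smul_comm, coeff_smul, smul_eq_mul, hT]
        have hymul : (y * F).IsHomogeneous k := by
          have h2 := hy1.mul hFhom
          rwa [show 1 + (k - 1) = k by omega] at h2
        have hyF : y * F ∈ I := by
          apply mem_of_support_subset I
          intro d hd
          by_contra hdI
          have hd0 : coeff d (y * F) ≠ 0 := mem_support_iff.mp hd
          have hdk : mdeg d = k := by
            have h3 := hymul hd0
            rwa [weight_one_eq_mdeg] at h3
          have hdB : d ∈ MSet K I k := ⟨hdk, hdI⟩
          rw [hcoeffmul] at hd0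
          obtain ⟨a, -, ha⟩ := Finset.exists_ne_zero_of_sum_ne_zero hd0
          have hTd : T d (((a : _) : _) : Fin n →₀ ℕ) ≠ 0 := fun h => ha (by rw [h, mul_zero])
          have hdN : d ∈ N := by
            rw [hN]
            exact Finset.mem_biUnion.mpr
              ⟨↑a, a.2, Finset.mem_filter.mpr ⟨hBfin.mem_toFinset.mpr hdB, hTd⟩⟩
          have h4 := congrFun hg ⟨d, hdN⟩
          simp only [Finset.sum_apply, Pi.smul_apply, smul_eq_mul, Pi.zero_apply] at h4
          exact hd0 h4
        have hFI : F ∈ I := hinj F hFhom hyF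
        by_contra hga
        have hsup : (((a₀ : _) : _) : Fin n →₀ ℕ) ∈ F.support :=
          mem_support_iff.mpr (by rw [hcoeffF]; exact hga)
        exact (hAfin.mem_toFinset.mp ((a₀ : _) : {x // x ∈ hAfin.toFinset}).2).2 (hmon F hFI _ hsup)
      have hcard := hvind.fintype_card_le_finrank
      rwa [Module.finrank_fintype_fun_eq_card, Fintype.card_coe, Fintype.card_coe] at hcard
    obtain ⟨φ, φinj, hφ⟩ :=
      (Finset.all_card_le_biUnion_card_iff_exists_injective
        (fun a : {x // x ∈ hAfin.toFinset} => hBfin.toFinset.filter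
          (fun b => T b (↑a : Fin n →₀ ℕ) ≠ 0))).mp hall
    apply matching_left I k (fun a => if h : a ∈ hAfin.toFinset then φ ⟨a, h⟩ else a)
    · intro a ha a' ha' heq
      have ha1 : a ∈ hAfin.toFinset := hAfin.mem_toFinset.mpr ha
      have ha1' : a' ∈ hAfin.toFinset := hAfin.mem_toFinset.mpr ha'
      simp only [dif_pos ha1, dif_pos ha1'] at heq
      exact congrArg Subtype.val (φinj heq)
    · intro a ha
      have ha1 : a ∈ hAfin.toFinset := hAfin.mem_toFinset.mpr ha
      have h5 := hφ ⟨a, ha1⟩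
      simp only [dif_pos ha1]
      exact hBfin.mem_toFinset.mp (Finset.mem_filter.mp h5).1
    · intro a ha
      have ha1 : a ∈ hAfin.toFinset := hAfin.mem_toFinset.mpr ha
      have h5 := hφ ⟨a, ha1⟩
      simp only [dif_pos ha1]
      exact hTle _ _ (Finset.mem_filter.mp h5).2
  · -- surjective case
    have hall : ∀ s : Finset {x // x ∈ hBfin.toFinset},
        s.card ≤ (s.biUnion (fun b => hAfin.toFinset.filter
          (fun a => T (↑b : Fin n →₀ ℕ) a ≠ 0))).card := by
      intro s
      set N := s.biUnion (fun b => hAfin.toFinset.filter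
        (fun a => T (↑b : Fin n →₀ ℕ) a ≠ 0)) with hN
      have hvind : LinearIndependent K
          (fun (b : {x // x ∈ s}) => (fun a : {x // x ∈ N} =>
            T (((b : _) : _) : Fin n →₀ ℕ) ↑a)) := by
        rw [Fintype.linearIndependent_iff]
        intro g hg b₀
        have hcoe : Function.Injective
            (fun b : {x // x ∈ s} => (((b : _) : _) : Fin n →₀ ℕ)) := by
          intro a b h
          exact Subtype.ext (Subtype.ext h)
        have hrel : ∀ a ∈ MSet K I (k - 1),
            ∑ b : {x // x ∈ s}, g b * T (((b : _) : _) : Fin n →₀ ℕ) a = 0 := by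
          intro a ha
          by_cases haN : a ∈ N
          · have h4 := congrFun hg ⟨a, haN⟩
            simpa only [Finset.sum_apply, Pi.smul_apply, smul_eq_mul, Pi.zero_apply] using h4
          · refine Finset.sum_eq_zero fun b _ => ?_
            have hTb : T (((b : _) : _) : Fin n →₀ ℕ) a = 0 := by
              by_contra hTb
              exact haN (by
                rw [hN]
                exact Finset.mem_biUnion.mpr
                  ⟨↑b, b.2, Finset.mem_filter.mpr ⟨hAfin.mem_toFinset.mpr ha, hTb⟩⟩)
            rw [hTb, mul_zero]
        have hb₀ : (((b₀ : _) : _) : Fin n →₀ ℕ) ∈ MSet K I k :=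
          hBfin.mem_toFinset.mp ((b₀ : _) : {x // x ∈ hBfin.toFinset}).2
        have hGhom : (monomial (((b₀ : _) : _) : Fin n →₀ ℕ) (1 : K)).IsHomogeneous k :=
          isHomogeneous_monomial 1 (by rw [degree_eq_mdeg]; exact hb₀.1)
        obtain ⟨f, hfhom, hfI⟩ := hsurj _ hGhom
        have hcoeq : ∀ b ∈ MSet K I k, coeff b (y * f)
            = coeff b (monomial (((b₀ : _) : _) : Fin n →₀ ℕ) (1 : K)) := by
          intro b hb
          have h0 : coeff b (monomial (((b₀ : _) : _) : Fin n →₀ ℕ) (1 : K) - y * f) = 0 := by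
            by_contra h
            exact hb.2 (hmon _ hfI b (mem_support_iff.mpr h))
          rw [coeff_sub] at h0
          exact (sub_eq_zero.mp h0).symm
        have hexp : ∀ b, coeff b (y * f) = ∑ a ∈ f.support, coeff a f * T b a := by
          intro b
          conv_lhs => rw [f.as_sum, Finset.mul_sum]
          rw [coeff_sum]
          refine Finset.sum_congr rfl fun a _ => ?_
          have hmono : monomial a (coeff a f) = coeff a f • monomial a (1 : K) := by
            rw [smul_monomial, smul_eq_mul, mul_one]
          rw [hmono, mul_smul_comm, coeff_smul, smul_eq_mul, hT]
        have hmain : ∑ b : {x // x ∈ s},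
            g b * coeff (((b : _) : _) : Fin n →₀ ℕ) (y * f) = g b₀ := by
          calc ∑ b : {x // x ∈ s}, g b * coeff (((b : _) : _) : Fin n →₀ ℕ) (y * f)
              = ∑ b : {x // x ∈ s}, g b * coeff (((b : _) : _) : Fin n →₀ ℕ)
                  (monomial (((b₀ : _) : _) : Fin n →₀ ℕ) (1 : K)) := by
                refine Finset.sum_congr rfl fun b _ => ?_
                rw [hcoeq _ (hBfin.mem_toFinset.mp ((b : _) : {x // x ∈ hBfin.toFinset}).2)]
            _ = g b₀ := by
                rw [Finset.sum_eq_single b₀]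
                · rw [coeff_monomial, if_pos rfl, mul_one]
                · intro b _ hb
                  rw [coeff_monomial, if_neg (fun h => hb (hcoe h).symm), mul_zero]
                · intro h
                  exact absurd (Finset.mem_univ b₀) h
        have hzero : ∑ b : {x // x ∈ s},
            g b * coeff (((b : _) : _) : Fin n →₀ ℕ) (y * f) = 0 := by
          calc ∑ b : {x // x ∈ s}, g b * coeff (((b : _) : _) : Fin n →₀ ℕ) (y * f)
              = ∑ b : {x // x ∈ s}, ∑ a ∈ f.support,
                  g b * (coeff a f * T (((b : _) : _) : Fin n →₀ ℕ) a) := by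
                refine Finset.sum_congr rfl fun b _ => ?_
                rw [hexp, Finset.mul_sum]
            _ = ∑ a ∈ f.support, ∑ b : {x // x ∈ s},
                  g b * (coeff a f * T (((b : _) : _) : Fin n →₀ ℕ) a) := Finset.sum_comm
            _ = 0 := by
                refine Finset.sum_eq_zero fun a ha => ?_
                have hadeg : mdeg a = k - 1 := by
                  have h6 := hfhom (mem_support_iff.mp ha)
                  rwa [weight_one_eq_mdeg] at h6
                by_cases haI : monomial a (1 : K) ∈ I
                · refine Finset.sum_eq_zero fun b _ => ?_
                  rw [hTI _ (hBfin.mem_toFinset.mp ((b : _) : {x // x ∈ hBfin.toFinset}).2) a haI,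
                    mul_zero, mul_zero]
                · have h7 := hrel a ⟨hadeg, haI⟩
                  calc ∑ b : {x // x ∈ s}, g b * (coeff a f * T (((b : _) : _) : Fin n →₀ ℕ) a)
                      = coeff a f * ∑ b : {x // x ∈ s},
                          g b * T (((b : _) : _) : Fin n →₀ ℕ) a := by
                        rw [Finset.mul_sum]
                        exact Finset.sum_congr rfl fun b _ => by ring
                    _ = 0 := by rw [h7, mul_zero]
        rw [← hmain]
        exact hzero
      have hcard := hvind.fintype_card_le_finrank
      rwa [Module.finrank_fintype_fun_eq_card, Fintype.card_coe, Fintype.card_coe] at hcard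
    obtain ⟨ψ, ψinj, hψ⟩ :=
      (Finset.all_card_le_biUnion_card_iff_exists_injective
        (fun b : {x // x ∈ hBfin.toFinset} => hAfin.toFinset.filter
          (fun a => T (↑b : Fin n →₀ ℕ) a ≠ 0))).mp hall
    apply matching_right I k (fun b => if h : b ∈ hBfin.toFinset then ψ ⟨b, h⟩ else b)
    · intro b hb b' hb' heq
      have hb1 : b ∈ hBfin.toFinset := hBfin.mem_toFinset.mpr hb
      have hb1' : b' ∈ hBfin.toFinset := hBfin.mem_toFinset.mpr hb'
      simp only [dif_pos hb1, dif_pos hb1'] at heq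
      exact congrArg Subtype.val (ψinj heq)
    · intro b hb
      have hb1 : b ∈ hBfin.toFinset := hBfin.mem_toFinset.mpr hb
      have h5 := hψ ⟨b, hb1⟩
      simp only [dif_pos hb1]
      exact hAfin.mem_toFinset.mp (Finset.mem_filter.mp h5).1
    · intro b hb
      have hb1 : b ∈ hBfin.toFinset := hBfin.mem_toFinset.mpr hb
      have h5 := hψ ⟨b, hb1⟩
      simp only [dif_pos hb1]
      exact hTle _ _ (Finset.mem_filter.mp h5).2
end
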